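/- arXiv:1806.06280 — 6 statements merged into one kernel-verified Lean document; each statement's English description precedes it below -/
import Mathlib

section
/- Let f be a monic polynomial of degree n over ℂ with distinct roots λ₁,…,λₙ. Fix an index i and let z ∈ ℂ with f(z) ≠ 0, and set S₁ = Σ_{j≠i} 1/(z-λⱼ), S₂ = Σ_{j≠i} 1/(z-λⱼ)². If 2[f'(z)]² − f(z)f''(z) − f(z)²(S₂ + S₁²) ≠ 0 and f'(z) ≠ 0, then λᵢ = z − 2 f(z) f'(z) / (2[f'(z)]² − f(z)f''(z) − f(z)²(S₂ + S₁²)). -/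
open Finset Polynomial

lemma stmt_4_deriv_prod {ι : Type*} [DecidableEq ι] (s : Finset ι) (g : ι → Polynomial ℂ) :
    derivative (∏ j ∈ s, g j) = ∑ k ∈ s, (∏ j ∈ s.erase k, g j) * derivative (g k) := by
  rw [Finset.prod_eq_multiset_prod, Polynomial.derivative_prod, Finset.sum_eq_multiset_sum]
  congr 1

theorem stmt_4 (n : ℕ) (lam : Fin n → ℂ) (hdist : Function.Injective lam)
    (f : Polynomial ℂ) (hf : f = ∏ j, (X - C (lam j))) (i : Fin n) (z : ℂ)
    (hz : f.eval z ≠ 0)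
    (S1 S2 : ℂ)
    (hS1 : S1 = ∑ j ∈ Finset.univ.erase i, (z - lam j)⁻¹)
    (hS2 : S2 = ∑ j ∈ Finset.univ.erase i, ((z - lam j)⁻¹) ^ 2)
    (hden : 2 * (f.derivative.eval z) ^ 2 - f.eval z * (derivative^[2] f).eval z
        - (f.eval z) ^ 2 * (S2 + S1 ^ 2) ≠ 0)
    (hf' : f.derivative.eval z ≠ 0) :
    lam i = z - 2 * f.eval z * f.derivative.eval z /
      (2 * (f.derivative.eval z) ^ 2 - f.eval z * (derivative^[2] f).eval z
        - (f.eval z) ^ 2 * (S2 + S1 ^ 2)) := by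
  set w : Fin n → ℂ := fun j => z - lam j with hwdef
  have hPe : f.eval z = ∏ j, w j := by simp [hf, eval_prod, hwdef]
  have hw : ∀ j, w j ≠ 0 := by
    intro j
    have := hz
    rw [hPe] at this
    exact fun h => this (Finset.prod_eq_zero (mem_univ j) h)
  set u : Fin n → ℂ := fun j => (w j)⁻¹ with hudef
  set T1 : ℂ := ∑ j, u j with hT1
  set T2 : ℂ := ∑ j, (u j) ^ 2 with hT2
  -- products over erased sets
  have hprod1 : ∀ k : Fin n, (∏ j ∈ univ.erase k, w j) = (∏ j, w j) * u k := by
    intro k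
    have h := Finset.prod_erase_mul univ w (mem_univ k)
    show _ = _ * (w k)⁻¹
    rw [← h, mul_assoc, mul_inv_cancel₀ (hw k), mul_one]
  have hprod2 : ∀ k : Fin n, ∀ m ∈ univ.erase k,
      (∏ j ∈ (univ.erase k).erase m, w j) = (∏ j, w j) * u k * u m := by
    intro k m hm
    have h1 := Finset.prod_erase_mul (univ.erase k) w hm
    have h2 : (∏ j ∈ (univ.erase k).erase m, w j)
        = (∏ j ∈ univ.erase k, w j) * (w m)⁻¹ := by
      rw [← h1, mul_assoc, mul_inv_cancel₀ (hw m), mul_one]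
    rw [h2, hprod1 k]
  -- first derivative
  have hderiv : f.derivative = ∑ k, ∏ j ∈ univ.erase k, (X - C (lam j)) := by
    rw [hf, stmt_4_deriv_prod]
    simp
  have hf'e : f.derivative.eval z = f.eval z * T1 := by
    rw [hderiv, hPe, hT1]
    simp only [eval_finset_sum, eval_prod, eval_sub, eval_X, eval_C]
    rw [Finset.mul_sum]
    exact Finset.sum_congr rfl fun k _ => hprod1 k
  -- second derivative
  have hderiv2 : (derivative^[2] f) = ∑ k, ∑ m ∈ univ.erase k,
      ∏ j ∈ (univ.erase k).erase m, (X - C (lam j)) := by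
    rw [Function.iterate_succ, Function.iterate_one, Function.comp_apply, hderiv,
      derivative_sum]
    refine Finset.sum_congr rfl fun k _ => ?_
    rw [stmt_4_deriv_prod]
    simp
  have hsum2 : (∑ k, ∑ m ∈ univ.erase k, u k * u m) = T1 ^ 2 - T2 := by
    have : T1 ^ 2 = ∑ k, ∑ m, u k * u m := by
      rw [hT1, sq, Finset.sum_mul_sum]
    rw [this, hT2]
    rw [← Finset.sum_sub_distrib]
    refine Finset.sum_congr rfl fun k _ => ?_
    rw [← Finset.add_sum_erase univ (fun m => u k * u m) (mem_univ k)]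
    ring
  have hf''e : (derivative^[2] f).eval z = f.eval z * (T1 ^ 2 - T2) := by
    rw [hderiv2, hPe, ← hsum2]
    simp only [eval_finset_sum, eval_prod, eval_sub, eval_X, eval_C]
    rw [Finset.mul_sum]
    refine Finset.sum_congr rfl fun k _ => ?_
    rw [Finset.mul_sum]
    refine Finset.sum_congr rfl fun m hm => ?_
    rw [← mul_assoc]
    exact hprod2 k m hm
  -- S1, S2 in terms of T1, T2
  have hS1' : S1 = T1 - u i := by
    rw [hS1, hT1, ← Finset.add_sum_erase univ u (mem_univ i)]
    simp [hudef, hwdef]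
  have hS2' : S2 = T2 - (u i) ^ 2 := by
    rw [hS2, hT2, ← Finset.add_sum_erase univ (fun j => (u j) ^ 2) (mem_univ i)]
    simp [hudef, hwdef]
  -- denominator simplification
  set P : ℂ := f.eval z with hP
  have hui : u i ≠ 0 := inv_ne_zero (hw i)
  have hT1ne : T1 ≠ 0 := by
    intro h
    rw [hf'e, h, mul_zero] at hf'
    exact hf' rfl
  have hDen : 2 * (f.derivative.eval z) ^ 2 - P * (derivative^[2] f).eval z
      - P ^ 2 * (S2 + S1 ^ 2) = 2 * P ^ 2 * u i * T1 := by
    rw [hf'e, hf''e, hS1', hS2']; ring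
  rw [hDen, hf'e]
  have hDne : 2 * P ^ 2 * u i * T1 ≠ 0 := by
    refine mul_ne_zero (mul_ne_zero (mul_ne_zero two_ne_zero ?_) hui) hT1ne
    exact pow_ne_zero _ hz
  have hwi : (u i)⁻¹ = z - lam i := by
    simp [hudef, hwdef]
  have hkey : 2 * P * (P * T1) / (2 * P ^ 2 * u i * T1) = (u i)⁻¹ := by
    rw [div_eq_iff hDne]
    field_simp
  rw [hkey, hwi]; ring
end

section
/- For any k ≥ 1 the complete homogeneous symmetric polynomial satisfies h_k = Σ over tuples (r₁,…,r_k) of nonnegative integers with r₁ + 2r₂ + ⋯ + k·r_k = k of ∏_{j=1}^k p_j^{r_j} / (r_j! · j^{r_j}), as symmetric polynomials in n variables over ℚ. -/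
open Finset

def cutA (n k : ℕ) : Finset (Fin n → ℕ) :=
  (Fintype.piFinset fun _ => Finset.range (k+1)).filter fun d => ∑ l, d l = k

def hp (n : ℕ) (x : Fin n → ℚ) (k : ℕ) : ℚ := ∑ d ∈ cutA n k, ∏ l, x l ^ d l

def pp (n : ℕ) (x : Fin n → ℚ) (i : ℕ) : ℚ := ∑ l, x l ^ i

lemma count_sum_replicate {n : ℕ} (d : Fin n → ℕ) (l : Fin n) :
    Multiset.count l (∑ l' : Fin n, Multiset.replicate (d l') l') = d l := by
  rw [Multiset.count_sum']
  rw [Finset.sum_eq_single l]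
  · simp [Multiset.count_replicate]
  · intro b _ hb; simp [Multiset.count_replicate, hb]
  · simp

lemma sum_count_eq {n k : ℕ} (m : Sym (Fin n) k) :
    ∑ l, Multiset.count l (m : Multiset (Fin n)) = k := by
  have h2 := Multiset.toFinset_sum_count_eq (↑m : Multiset (Fin n))
  have h3 : Multiset.card (↑m : Multiset (Fin n)) = k := m.2
  rw [h3] at h2
  refine Eq.trans ?_ h2
  refine (Finset.sum_subset (Finset.subset_univ _) ?_).symm
  intro l _ hl
  simp only [Multiset.mem_toFinset] at hl
  simp [Multiset.count_eq_zero_of_notMem hl]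

lemma replicate_eq_self {n k : ℕ} (m : Sym (Fin n) k) :
    (∑ l : Fin n, Multiset.replicate (Multiset.count l (m : Multiset (Fin n))) l)
      = (m : Multiset (Fin n)) := by
  ext a
  rw [count_sum_replicate (fun l => Multiset.count l (m : Multiset (Fin n))) a]

lemma sym_eq_hp (n : ℕ) (x : Fin n → ℚ) (k : ℕ) :
    (∑ m ∈ (Finset.univ : Finset (Fin n)).sym k, ((m : Multiset (Fin n)).map x).prod)
      = hp n x k := by
  unfold hp cutA
  refine Finset.sum_bij' (fun m _ l => Multiset.count l (m : Multiset (Fin n)))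
    (fun d hd => ⟨∑ l, Multiset.replicate (d l) l, ?_⟩) ?_ ?_ ?_ ?_ ?_
  · simp only [mem_filter] at hd
    rw [Multiset.card_sum]
    simpa using hd.2
  · intro m _
    simp only [mem_filter, Fintype.mem_piFinset, Finset.mem_range]
    refine ⟨fun l => ?_, sum_count_eq m⟩
    have h1 : Multiset.count l (m : Multiset (Fin n)) ≤ k := by
      have := Multiset.count_le_card l (m : Multiset (Fin n))
      simpa [m.2] using this
    omega
  · intro d hd
    exact Finset.mem_sym_iff.mpr fun a _ => Finset.mem_univ a
  · intro m hm
    apply Sym.coe_injective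
    exact replicate_eq_self m
  · intro d hd
    funext l
    exact count_sum_replicate d l
  · intro m _
    rw [Finset.prod_multiset_map_count]
    rw [Finset.prod_subset (Finset.subset_univ _)]
    intro l _ hl
    simp only [Multiset.mem_toFinset] at hl
    simp [Multiset.count_eq_zero_of_notMem hl]


lemma mem_cutA {n k : ℕ} {d : Fin n → ℕ} :
    d ∈ cutA n k ↔ (∀ l, d l ≤ k) ∧ ∑ l, d l = k := by
  simp only [cutA, mem_filter, Fintype.mem_piFinset, Finset.mem_range]
  constructor
  · rintro ⟨h1, h2⟩; exact ⟨fun l => by have := h1 l; omega, h2⟩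
  · rintro ⟨h1, h2⟩; exact ⟨fun l => by have := h1 l; omega, h2⟩

lemma le_sum_of_mem {n : ℕ} (d : Fin n → ℕ) (l : Fin n) : d l ≤ ∑ l', d l' :=
  Finset.single_le_sum (fun _ _ => Nat.zero_le _) (mem_univ l)

lemma stepA (n : ℕ) (x : Fin n → ℚ) (k i : ℕ) (hi1 : 1 ≤ i) (hik : i ≤ k) (l : Fin n) :
    (∑ d ∈ cutA n (k-i), x l ^ i * ∏ l', x l' ^ d l') =
    ∑ e ∈ (cutA n k).filter (fun e => i ≤ e l), ∏ l', x l' ^ e l' := by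
  have hspl : ∀ d : Fin n → ℕ, ∑ l', d l' = d l + ∑ l' ∈ univ \ {l}, d l' :=
    fun d => Finset.sum_eq_add_sum_sdiff_singleton_of_mem (mem_univ l) d
  refine Finset.sum_nbij' (fun d => Function.update d l (d l + i))
    (fun e => Function.update e l (e l - i)) ?_ ?_ ?_ ?_ ?_
  · intro d hd
    rw [mem_cutA] at hd
    obtain ⟨hb, hs⟩ := hd
    have hsu : ∑ l', Function.update d l (d l + i) l' = (d l + i) + ∑ l' ∈ univ \ {l}, d l' :=
      Finset.sum_update_of_mem (mem_univ l) d _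
    have hdl : d l ≤ k - i := hb l
    rw [mem_filter, mem_cutA]
    have hs2 : ∑ l', Function.update d l (d l + i) l' = k := by
      rw [hsu]; have := hspl d; omega
    refine ⟨⟨fun l' => ?_, hs2⟩, ?_⟩
    · rcases eq_or_ne l' l with rfl | h
      · simp only [Function.update_self]; omega
      · simp only [Function.update_of_ne h]
        have := le_sum_of_mem d l'
        omega
    · simp [Function.update_self]
  · intro e he
    rw [mem_filter, mem_cutA] at he
    obtain ⟨⟨hb, hs⟩, hil⟩ := he
    have hsu : ∑ l', Function.update e l (e l - i) l' = (e l - i) + ∑ l' ∈ univ \ {l}, e l' :=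
      Finset.sum_update_of_mem (mem_univ l) e _
    rw [mem_cutA]
    have hel := hb l
    have hs2 : ∑ l', Function.update e l (e l - i) l' = k - i := by
      rw [hsu]; have := hspl e; omega
    refine ⟨fun l' => ?_, hs2⟩
    rcases eq_or_ne l' l with rfl | h
    · simp only [Function.update_self]; omega
    · simp only [Function.update_of_ne h]
      have h4 : e l' ≤ ∑ l'' ∈ univ \ {l}, e l'' :=
        Finset.single_le_sum (fun _ _ => Nat.zero_le _)
          (by simp [Finset.mem_sdiff, h])
      have := hspl e
      omega
  · intro d _
    funext l'
    rcases eq_or_ne l' l with rfl | h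
    · simp
    · simp [Function.update_of_ne h]
  · intro e he
    rw [mem_filter] at he
    funext l'
    rcases eq_or_ne l' l with rfl | h
    · simp only [Function.update_self]
      have := he.2
      omega
    · simp [Function.update_of_ne h]
  · intro d _
    rw [← Finset.mul_prod_erase univ (fun l' => x l' ^ d l') (mem_univ l),
        ← Finset.mul_prod_erase univ
          (fun l' => x l' ^ (Function.update d l (d l + i) l')) (mem_univ l)]
    have herase : ∏ l' ∈ univ.erase l, x l' ^ (Function.update d l (d l + i) l') =
        ∏ l' ∈ univ.erase l, x l' ^ d l' := by
      refine Finset.prod_congr rfl fun l' hl' => ?_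
      rw [Function.update_of_ne (Finset.ne_of_mem_erase hl')]
    rw [herase, Function.update_self, pow_add]
    ring

lemma newton_hp (n : ℕ) (x : Fin n → ℚ) (k : ℕ) :
    (k : ℚ) * hp n x k = ∑ i ∈ Icc 1 k, pp n x i * hp n x (k - i) := by
  have expand : ∀ i ∈ Icc 1 k, pp n x i * hp n x (k - i) =
      ∑ l, ∑ d ∈ cutA n (k - i), x l ^ i * ∏ l', x l' ^ d l' := by
    intro i _
    rw [pp, hp, Finset.sum_mul]
    exact Finset.sum_congr rfl fun l _ => Finset.mul_sum _ _ _
  rw [Finset.sum_congr rfl expand, Finset.sum_comm]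
  have step : ∀ l : Fin n, (∑ i ∈ Icc 1 k, ∑ d ∈ cutA n (k - i), x l ^ i * ∏ l', x l' ^ d l')
      = ∑ e ∈ cutA n k, (e l : ℚ) * ∏ l', x l' ^ e l' := by
    intro l
    have h1 : ∀ i ∈ Icc 1 k, (∑ d ∈ cutA n (k - i), x l ^ i * ∏ l', x l' ^ d l') =
        ∑ e ∈ cutA n k, if i ≤ e l then ∏ l', x l' ^ e l' else 0 := by
      intro i hi
      rw [mem_Icc] at hi
      rw [stepA n x k i hi.1 hi.2 l, Finset.sum_filter]
    rw [Finset.sum_congr rfl h1, Finset.sum_comm]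
    refine Finset.sum_congr rfl fun e he => ?_
    rw [mem_cutA] at he
    rw [← Finset.sum_filter]
    have hset : (Icc 1 k).filter (fun i => i ≤ e l) = Icc 1 (e l) := by
      have hek := he.1 l
      ext j
      simp only [Finset.mem_filter, Finset.mem_Icc]
      omega
    rw [hset, Finset.sum_const, Nat.card_Icc, nsmul_eq_mul]
    norm_num
  rw [Finset.sum_congr rfl fun l _ => step l, Finset.sum_comm]
  rw [hp, Finset.mul_sum]
  refine Finset.sum_congr rfl fun e he => ?_
  rw [mem_cutA] at he
  rw [← Finset.sum_mul]
  congr 1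
  rw [← Nat.cast_sum, he.2]

def TT (n : ℕ) (x : Fin n → ℚ) (N m : ℕ) : ℚ :=
  ∑ r ∈ (Fintype.piFinset fun _ : Fin N => Finset.range (N + 1)).filter
      (fun r => ∑ j, (j.1 + 1) * r j = m),
    ∏ j, pp n x (j.1 + 1) ^ (r j) / ((r j).factorial * ((j.1 + 1 : ℕ) : ℚ) ^ (r j))

def AA (N m : ℕ) : Finset (Fin N → ℕ) :=
  (Fintype.piFinset fun _ : Fin N => Finset.range (N + 1)).filter
    (fun r => ∑ j, (j.1 + 1) * r j = m)

def FF (n : ℕ) (x : Fin n → ℚ) (N : ℕ) (r : Fin N → ℕ) : ℚ :=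
  ∏ j, pp n x (j.1 + 1) ^ (r j) / ((r j).factorial * ((j.1 + 1 : ℕ) : ℚ) ^ (r j))

lemma mem_AA {N m : ℕ} {r : Fin N → ℕ} :
    r ∈ AA N m ↔ (∀ j, r j ≤ N) ∧ ∑ j, (j.1 + 1) * r j = m := by
  simp only [AA, mem_filter, Fintype.mem_piFinset, Finset.mem_range]
  constructor
  · rintro ⟨h1, h2⟩; exact ⟨fun j => by have := h1 j; omega, h2⟩
  · rintro ⟨h1, h2⟩; exact ⟨fun j => by have := h1 j; omega, h2⟩

lemma TT_eq (n : ℕ) (x : Fin n → ℚ) (N m : ℕ) :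
    TT n x N m = ∑ r ∈ AA N m, FF n x N r := rfl

lemma cutA_zero (n : ℕ) : cutA n 0 = {fun _ => 0} := by
  ext d
  simp only [mem_cutA, Finset.mem_singleton]
  constructor
  · rintro ⟨h1, _⟩
    funext l
    exact Nat.le_zero.mp (h1 l)
  · rintro rfl
    exact ⟨fun l => le_rfl, by simp⟩

lemma hp_zero (n : ℕ) (x : Fin n → ℚ) : hp n x 0 = 1 := by
  rw [hp, cutA_zero]; simp

lemma TT_zero (n : ℕ) (x : Fin n → ℚ) (N : ℕ) : TT n x N 0 = 1 := by
  rw [TT_eq]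
  have hset : AA N 0 = {fun _ => 0} := by
    ext r
    simp only [mem_AA, Finset.mem_singleton, Finset.sum_eq_zero_iff, mem_univ, true_implies]
    constructor
    · rintro ⟨_, h2⟩
      funext j
      rcases Nat.mul_eq_zero.mp (h2 j) with h | h
      · omega
      · exact h
    · rintro rfl
      exact ⟨fun _ => Nat.zero_le N, fun j => by simp⟩
  rw [hset, Finset.sum_singleton, FF]
  simp

lemma weight_le {N m : ℕ} {r : Fin N → ℕ} (hr : r ∈ AA N m) (j : Fin N) :
    (j.1 + 1) * r j ≤ m := by
  rw [mem_AA] at hr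
  rw [← hr.2]
  exact Finset.single_le_sum (f := fun j' : Fin N => (j'.1 + 1) * r j')
    (fun _ _ => Nat.zero_le _) (mem_univ j)

lemma weight_update_sub {N : ℕ} (r : Fin N → ℕ) (j : Fin N) (v : ℕ) :
    ∑ j' : Fin N, (j'.1 + 1) * Function.update r j v j'
      = (j.1 + 1) * v + ∑ j' ∈ univ \ {j}, (j'.1 + 1) * r j' := by
  rw [Finset.sum_eq_add_sum_sdiff_singleton_of_mem (mem_univ j)]
  simp only [Function.update_self]
  refine congrArg _ (Finset.sum_congr rfl fun j' hj' => ?_)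
  rw [Finset.mem_sdiff, Finset.mem_singleton] at hj'
  rw [Function.update_of_ne hj'.2]

lemma newton_TT (n : ℕ) (x : Fin n → ℚ) (N m : ℕ) (hm1 : 1 ≤ m) (hmN : m ≤ N) :
    (m : ℚ) * TT n x N m = ∑ i ∈ Icc 1 m, pp n x i * TT n x N (m - i) := by
  -- Step 1
  have step1 : (m : ℚ) * TT n x N m
      = ∑ j : Fin N, ∑ r ∈ AA N m, ((j.1 + 1) * r j : ℕ) * FF n x N r := by
    rw [TT_eq, Finset.mul_sum, Finset.sum_comm]
    refine Finset.sum_congr rfl fun r hr => ?_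
    rw [mem_AA] at hr
    rw [← Finset.sum_mul, ← Nat.cast_sum, hr.2]
  rw [step1]
  -- Step 2
  have step2 : ∀ j : Fin N, (∑ r ∈ AA N m, ((j.1 + 1) * r j : ℕ) * FF n x N r)
      = if j.1 + 1 ≤ m then pp n x (j.1 + 1) * TT n x N (m - (j.1 + 1)) else 0 := by
    intro j
    have hrestrict : (∑ r ∈ AA N m, ((j.1 + 1) * r j : ℕ) * FF n x N r)
        = ∑ r ∈ (AA N m).filter (fun r => 1 ≤ r j), ((j.1 + 1) * r j : ℕ) * FF n x N r := by
      refine (Finset.sum_filter_of_ne fun r _ hne => ?_).symm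
      by_contra h
      push_neg at h
      have : r j = 0 := by omega
      simp [this] at hne
    rw [hrestrict]
    by_cases hjm : j.1 + 1 ≤ m
    · rw [if_pos hjm, TT_eq, Finset.mul_sum]
      refine Finset.sum_nbij' (fun r => Function.update r j (r j - 1))
        (fun r' => Function.update r' j (r' j + 1)) ?_ ?_ ?_ ?_ ?_
      · intro r hr
        rw [mem_filter] at hr
        obtain ⟨hrA, hr1⟩ := hr
        have hwr := weight_le hrA j
        rw [mem_AA] at hrA
        obtain ⟨hb, hw⟩ := hrA
        show Function.update r j (r j - 1) ∈ AA N (m - (j.1 + 1))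
        rw [mem_AA]
        constructor
        · intro j'
          rcases eq_or_ne j' j with rfl | h
          · simp only [Function.update_self]
            have := hb j'
            omega
          · simp only [Function.update_of_ne h]
            exact hb j'
        · rw [weight_update_sub]
          have hsp : ∑ j' : Fin N, (j'.1 + 1) * r j'
              = (j.1 + 1) * r j + ∑ j' ∈ univ \ {j}, (j'.1 + 1) * r j' :=
            Finset.sum_eq_add_sum_sdiff_singleton_of_mem (mem_univ j) _
          have hmm : (j.1 + 1) * r j = (j.1 + 1) * (r j - 1) + (j.1 + 1) := by
            have h9 : r j = (r j - 1) + 1 := by omega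
            rw [h9, Nat.mul_add, Nat.mul_one, Nat.add_sub_cancel]
          omega
      · intro r' hr'
        have hwr' := weight_le hr' j
        rw [mem_AA] at hr'
        obtain ⟨hb, hw⟩ := hr'
        show Function.update r' j (r' j + 1) ∈ (AA N m).filter (fun r => 1 ≤ r j)
        rw [mem_filter, mem_AA]
        refine ⟨⟨?_, ?_⟩, ?_⟩
        · intro j'
          rcases eq_or_ne j' j with rfl | h
          · simp only [Function.update_self]
            have h5 : r' j' ≤ (j'.1 + 1) * r' j' :=
              Nat.le_mul_of_pos_left _ (by omega)
            omega
          · simp only [Function.update_of_ne h]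
            exact hb j'
        · rw [weight_update_sub]
          have hsp : ∑ j' : Fin N, (j'.1 + 1) * r' j'
              = (j.1 + 1) * r' j + ∑ j' ∈ univ \ {j}, (j'.1 + 1) * r' j' :=
            Finset.sum_eq_add_sum_sdiff_singleton_of_mem (mem_univ j) _
          have hmm : (j.1 + 1) * (r' j + 1) = (j.1 + 1) * r' j + (j.1 + 1) := by
            rw [Nat.mul_add, Nat.mul_one]
          omega
        · simp only [Function.update_self]
          omega
      · intro r hr
        rw [mem_filter] at hr
        show Function.update (Function.update r j (r j - 1)) j
            (Function.update r j (r j - 1) j + 1) = r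
        funext j'
        rcases eq_or_ne j' j with rfl | h
        · simp only [Function.update_self]
          have := hr.2
          omega
        · simp only [Function.update_of_ne h]
      · intro r' _
        show Function.update (Function.update r' j (r' j + 1)) j
            (Function.update r' j (r' j + 1) j - 1) = r'
        funext j'
        rcases eq_or_ne j' j with rfl | h
        · simp only [Function.update_self]
          omega
        · simp only [Function.update_of_ne h]
      · intro r hr
        rw [mem_filter] at hr
        obtain ⟨_, hr1⟩ := hr
        show ((j.1 + 1) * r j : ℕ) * FF n x N r
            = pp n x (j.1 + 1) * FF n x N (Function.update r j (r j - 1))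
        rw [FF, FF]
        rw [← Finset.mul_prod_erase univ
            (fun j' => pp n x (j'.1 + 1) ^ (r j') /
              ((r j').factorial * ((j'.1 + 1 : ℕ) : ℚ) ^ (r j'))) (mem_univ j),
            ← Finset.mul_prod_erase univ
            (fun j' => pp n x (j'.1 + 1) ^ (Function.update r j (r j - 1) j') /
              ((Function.update r j (r j - 1) j').factorial *
                ((j'.1 + 1 : ℕ) : ℚ) ^ (Function.update r j (r j - 1) j'))) (mem_univ j)]
        have herase : ∏ j' ∈ univ.erase j,
            pp n x (j'.1 + 1) ^ (Function.update r j (r j - 1) j') /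
              ((Function.update r j (r j - 1) j').factorial *
                ((j'.1 + 1 : ℕ) : ℚ) ^ (Function.update r j (r j - 1) j'))
            = ∏ j' ∈ univ.erase j,
              pp n x (j'.1 + 1) ^ (r j') /
                ((r j').factorial * ((j'.1 + 1 : ℕ) : ℚ) ^ (r j')) := by
          refine Finset.prod_congr rfl fun j' hj' => ?_
          rw [Function.update_of_ne (Finset.ne_of_mem_erase hj')]
        rw [herase, Function.update_self]
        rw [← mul_assoc, ← mul_assoc]
        congr 1
        obtain ⟨t, ht⟩ : ∃ t, r j = t + 1 := ⟨r j - 1, by omega⟩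
        rw [ht, Nat.add_sub_cancel]
        have hfac : ((t + 1).factorial : ℚ) = (t + 1) * t.factorial := by
          rw [Nat.factorial_succ]; push_cast; ring
        have hfne : (t.factorial : ℚ) ≠ 0 := Nat.cast_ne_zero.mpr t.factorial_ne_zero
        have hcne : ((j.1 + 1 : ℕ) : ℚ) ≠ 0 := Nat.cast_ne_zero.mpr (by omega)
        rw [hfac]
        field_simp
        push_cast
        ring
    · rw [if_neg hjm]
      have hempty : (AA N m).filter (fun r => 1 ≤ r j) = ∅ := by
        rw [Finset.eq_empty_iff_forall_notMem]
        intro r hr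
        rw [mem_filter] at hr
        have h4 := weight_le hr.1 j
        have h5 : (j.1 + 1) * 1 ≤ (j.1 + 1) * r j := Nat.mul_le_mul_left _ hr.2
        rw [Nat.mul_one] at h5
        omega
      rw [hempty, Finset.sum_empty]
  rw [Finset.sum_congr rfl fun j _ => step2 j]
  -- Step 3
  rw [Fin.sum_univ_eq_sum_range
    (fun j => if j + 1 ≤ m then pp n x (j + 1) * TT n x N (m - (j + 1)) else 0) N]
  rw [← Finset.sum_filter]
  have hset : (Finset.range N).filter (fun j => j + 1 ≤ m) = Finset.range m := by
    ext j
    simp only [Finset.mem_filter, Finset.mem_range]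
    omega
  rw [hset]
  refine Finset.sum_nbij' (fun j => j + 1) (fun i => i - 1) ?_ ?_ ?_ ?_ ?_
  · intro a ha
    rw [Finset.mem_range] at ha
    show a + 1 ∈ Icc 1 m
    rw [mem_Icc]; omega
  · intro a ha
    rw [mem_Icc] at ha
    show a - 1 ∈ Finset.range m
    rw [Finset.mem_range]; omega
  · intro a _
    show a + 1 - 1 = a
    omega
  · intro a ha
    rw [mem_Icc] at ha
    show a - 1 + 1 = a
    omega
  · intro a _
    rfl

lemma hp_eq_TT (n : ℕ) (x : Fin n → ℚ) (N : ℕ) :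
    ∀ m, m ≤ N → hp n x m = TT n x N m := by
  intro m
  induction m using Nat.strong_induction_on with
  | _ m ih =>
    intro hmN
    rcases Nat.eq_zero_or_pos m with rfl | hm
    · rw [hp_zero, TT_zero]
    · have h1 := newton_hp n x m
      have h2 := newton_TT n x N m hm hmN
      have heq : (m : ℚ) * hp n x m = (m : ℚ) * TT n x N m := by
        rw [h1, h2]
        refine Finset.sum_congr rfl fun i hi => ?_
        rw [mem_Icc] at hi
        rw [ih (m - i) (by omega) (by omega)]
      have hm0 : (m : ℚ) ≠ 0 := Nat.cast_ne_zero.mpr (by omega)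
      exact mul_left_cancel₀ hm0 heq

theorem stmt_8 (n : ℕ) (x : Fin n → ℚ) (k : ℕ) (hk : 1 ≤ k) :
    (∑ m ∈ (Finset.univ : Finset (Fin n)).sym k, ((m : Multiset (Fin n)).map x).prod) =
      ∑ r ∈ (Fintype.piFinset fun _ : Fin k => Finset.range (k + 1)).filter
          (fun r => ∑ j, (j.1 + 1) * r j = k),
        ∏ j, (∑ l, x l ^ (j.1 + 1)) ^ (r j) /
          ((r j).factorial * ((j.1 + 1 : ℕ) : ℚ) ^ (r j)) := by
  rw [sym_eq_hp, hp_eq_TT n x k k le_rfl]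
  rfl
end

section
/- Let f(z) = zⁿ + a_{n-1}z^{n-1} + ⋯ + a₀ = ∏_{j=1}^n (z − λⱼ) over ℂ with n ≥ 2. Fix i and z ∈ ℂ with z ≠ λⱼ for all j. Then (z − λᵢ)² − (nz + a_{n-1})(z − λᵢ) + f(z)·e_{n-2;i} = 0, where e_{n-2;i} = e_{n-2}(1/(z−λ₁),…,1/(z−λ_{i-1}),1/(z−λ_{i+1}),…,1/(z−λₙ)). -/
open Finset Polynomial

lemma sum_powersetCard_pred {ι : Type*} [DecidableEq ι] (t : Finset ι) (ht : t.Nonempty)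
    (g : ι → ℂ) :
    ∑ s ∈ Finset.powersetCard (t.card - 1) t, ∏ j ∈ s, g j
      = ∑ k ∈ t, ∏ j ∈ t.erase k, g j := by
  refine (Finset.sum_bij (fun k hk => t.erase k) ?_ ?_ ?_ ?_).symm
  · intro k hk
    rw [Finset.mem_powersetCard]
    exact ⟨Finset.erase_subset _ _, by rw [Finset.card_erase_of_mem hk]⟩
  · intro a ha b hb h
    by_contra hab
    have h' : t.erase a = t.erase b := h
    have : a ∈ t.erase b := Finset.mem_erase.2 ⟨hab, ha⟩
    rw [← h'] at this
    exact (Finset.mem_erase.1 this).1 rfl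
  · intro s hs
    rw [Finset.mem_powersetCard] at hs
    have hcard : (t \ s).card = 1 := by
      have h1 := Finset.card_pos.2 ht
      rw [Finset.card_sdiff_of_subset hs.1, hs.2]
      omega
    obtain ⟨k, hk⟩ := Finset.card_eq_one.1 hcard
    have hkt : k ∈ t := (Finset.mem_sdiff.1 (hk ▸ Finset.mem_singleton_self k)).1
    refine ⟨k, hkt, ?_⟩
    have : t \ {k} = s := by
      rw [← hk, Finset.sdiff_sdiff_eq_self hs.1]
    rw [← this, Finset.sdiff_singleton_eq_erase]
  · intros; rfl

theorem stmt_11 (n : ℕ) (hn : 2 ≤ n) (lam : Fin n → ℂ) (f : Polynomial ℂ)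
    (hf : f = ∏ j, (X - C (lam j))) (i : Fin n) (z : ℂ) (hz : ∀ j, z ≠ lam j) :
    (z - lam i) ^ 2 - ((n : ℂ) * z + f.coeff (n - 1)) * (z - lam i)
        + f.eval z * (∑ s ∈ Finset.powersetCard (n - 2) (Finset.univ.erase i),
            ∏ j ∈ s, (z - lam j)⁻¹) = 0 := by
  set w : Fin n → ℂ := fun j => z - lam j with hw
  have hwne : ∀ j, w j ≠ 0 := fun j => sub_ne_zero.2 (hz j)
  have hcoeff : f.coeff (n - 1) = -∑ j, lam j := by
    rw [hf]
    have := prod_X_sub_C_coeff_card_pred (Finset.univ : Finset (Fin n)) lam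
      (by simp; omega)
    simpa using this
  have heval : f.eval z = ∏ j, w j := by simp [hf, hw, eval_prod]
  have hcard : (Finset.univ.erase i).card = n - 1 := by
    rw [Finset.card_erase_of_mem (Finset.mem_univ i)]; simp
  have h2 : n - 2 = (Finset.univ.erase i).card - 1 := by omega
  rw [h2, sum_powersetCard_pred _ (Finset.card_pos.1 (by omega))]
  -- evaluate f.eval z * sum
  have key : ∀ k ∈ Finset.univ.erase i,
      (∏ j, w j) * ∏ j ∈ (Finset.univ.erase i).erase k, (w j)⁻¹ = w i * w k := by
    intro k hk
    have hki : k ≠ i := (Finset.mem_erase.1 hk).1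
    have h1 : ∏ j, w j = w i * ∏ j ∈ Finset.univ.erase i, w j :=
      (Finset.mul_prod_erase _ _ (Finset.mem_univ i)).symm
    have h2' : ∏ j ∈ Finset.univ.erase i, w j
        = w k * ∏ j ∈ (Finset.univ.erase i).erase k, w j :=
      (Finset.mul_prod_erase _ _ hk).symm
    rw [h1, h2', Finset.prod_inv_distrib]
    have hne : ∏ j ∈ (Finset.univ.erase i).erase k, w j ≠ 0 :=
      Finset.prod_ne_zero_iff.2 fun j _ => hwne j
    field_simp
  rw [heval, Finset.mul_sum, Finset.sum_congr rfl key, ← Finset.mul_sum]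
  have hsum : (n : ℂ) * z + f.coeff (n - 1) = ∑ j, w j := by
    rw [hcoeff, hw]
    simp [Finset.sum_sub_distrib]
    ring
  rw [hsum, ← Finset.add_sum_erase _ w (Finset.mem_univ i)]
  ring
end

section
/- Let f(z) = zⁿ + a_{n-1}z^{n-1} + ⋯ + a₀ = ∏_{j=1}^n (z − λⱼ) over ℂ, and let 0 ≤ m ≤ n. For z with f(z) ≠ 0, f(z) · e_{n-m}(1/(z−λ₁),…,1/(z−λₙ)) = Σ_{l=0}^m a_{n-m+l} · C(n−m+l, n−m) · z^l, where aₙ = 1 and C denotes the binomial coefficient. -/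
open Finset Polynomial

theorem stmt_14 (n : ℕ) (lam : Fin n → ℂ) (f : Polynomial ℂ)
    (hf : f = ∏ j, (X - C (lam j))) (m : ℕ) (hm : m ≤ n) (z : ℂ)
    (hz : f.eval z ≠ 0) :
    f.eval z * (∑ s ∈ Finset.powersetCard (n - m) (Finset.univ : Finset (Fin n)),
        ∏ j ∈ s, (z - lam j)⁻¹) =
      ∑ l ∈ Finset.range (m + 1),
        f.coeff (n - m + l) * ((n - m + l).choose (n - m) : ℂ) * z ^ l := by
  have hfe : f.eval z = ∏ j, (z - lam j) := by simp [hf, eval_prod]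
  have hne : ∀ j : Fin n, z - lam j ≠ 0 := by
    intro j h
    apply hz
    rw [hfe]
    exact Finset.prod_eq_zero (Finset.mem_univ j) h
  -- LHS equals sum over complements
  have hL : f.eval z * (∑ s ∈ Finset.powersetCard (n - m) (Finset.univ : Finset (Fin n)),
      ∏ j ∈ s, (z - lam j)⁻¹)
      = ∑ t ∈ Finset.powersetCard m (Finset.univ : Finset (Fin n)),
        ∏ j ∈ t, (z - lam j) := by
    rw [Finset.mul_sum]
    apply Finset.sum_nbij' (fun s => sᶜ) (fun t => tᶜ)
    · intro s hs
      simp only [Finset.mem_powersetCard_univ] at hs ⊢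
      rw [Finset.card_compl, hs, Fintype.card_fin]; omega
    · intro t ht
      simp only [Finset.mem_powersetCard_univ] at ht ⊢
      rw [Finset.card_compl, ht, Fintype.card_fin]
    · intro s _; simp
    · intro t _; simp
    · intro s hs
      rw [hfe, ← Finset.prod_mul_prod_compl s (fun j => z - lam j)]
      rw [mul_comm (∏ j ∈ s, (z - lam j)) _, mul_assoc, ← Finset.prod_mul_distrib]
      simp [mul_inv_cancel₀ (hne _)]
  rw [hL]
  -- RHS via Hasse derivative / Taylor expansion
  have hg : (∏ j, (X + C (z - lam j)) : Polynomial ℂ).coeff (n - m)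
      = ∑ t ∈ Finset.powersetCard m (Finset.univ : Finset (Fin n)),
        ∏ j ∈ t, (z - lam j) := by
    rw [Finset.prod_X_add_C_coeff _ _ (by simp [Nat.sub_le n m])]
    simp [Nat.sub_sub_self hm]
  have hcomp : f.comp (X + C z) = ∏ j, (X + C (z - lam j)) := by
    rw [hf, Polynomial.prod_comp]
    congr 1
    ext j
    simp [sub_comp]
    ring
  have htaylor : (∏ j, (X + C (z - lam j)) : Polynomial ℂ).coeff (n - m)
      = (Polynomial.hasseDeriv (n - m) f).eval z := by
    rw [← hcomp, ← taylor_apply, taylor_coeff]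
  have hdeg : f.natDegree = n := by
    rw [hf]
    rw [natDegree_prod_of_monic _ _ (fun j _ => monic_X_sub_C (lam j))]
    simp
  have hdeg2 : (Polynomial.hasseDeriv (n - m) f).natDegree < m + 1 := by
    have := Polynomial.natDegree_hasseDeriv_le f (n - m)
    omega
  rw [← hg, htaylor, Polynomial.eval_eq_sum_range' hdeg2]
  apply Finset.sum_congr rfl
  intro l _
  rw [Polynomial.hasseDeriv_coeff]
  rw [Nat.add_comm l (n - m)]
  ring
end

section
/- Let f(z) = ∏_{j=1}^n (z−λⱼ) be monic over ℂ with distinct roots, n ≥ 2. Fix i, let z ∈ ℂ with z ≠ λⱼ for all j, and suppose nz + a_{n-1} ≠ 0 where a_{n-1} = −Σⱼλⱼ. Let W = f(z)/∏_{j≠i}(z−λⱼ). Then λᵢ = z − (W/(nz + a_{n-1}))·((n−1)z − Σ_{j≠i}λⱼ + W). -/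
open Finset

theorem stmt_17 (n : ℕ) (hn : 2 ≤ n) (lam : Fin n → ℂ)
    (hdist : Function.Injective lam) (i : Fin n) (z : ℂ)
    (hz : ∀ j, z ≠ lam j)
    (ha : (n : ℂ) * z + (-∑ j, lam j) ≠ 0) :
    let W : ℂ := (∏ j, (z - lam j)) / ∏ j ∈ Finset.univ.erase i, (z - lam j)
    lam i = z - (W / ((n : ℂ) * z + (-∑ j, lam j))) *
      (((n : ℂ) - 1) * z - (∑ j ∈ Finset.univ.erase i, lam j) + W) := by
  intro W
  have hprodne : (∏ j ∈ Finset.univ.erase i, (z - lam j)) ≠ 0 := by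
    apply Finset.prod_ne_zero_iff.2
    intro j _
    exact sub_ne_zero.2 (hz j)
  have hsplit : (∏ j, (z - lam j)) = (z - lam i) * ∏ j ∈ Finset.univ.erase i, (z - lam j) :=
    (Finset.mul_prod_erase Finset.univ _ (Finset.mem_univ i)).symm
  have hW : W = z - lam i := by
    simp only [W, hsplit]
    field_simp
  have hsum : (∑ j, lam j) = lam i + ∑ j ∈ Finset.univ.erase i, lam j :=
    (Finset.add_sum_erase Finset.univ _ (Finset.mem_univ i)).symm
  have hA : ((n : ℂ) - 1) * z - (∑ j ∈ Finset.univ.erase i, lam j) + W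
      = (n : ℂ) * z + (-∑ j, lam j) := by
    rw [hW, hsum]; ring
  rw [hA, hW, div_mul_cancel₀ _ ha]
  ring
end

section
/- For n−1 complex numbers μⱼ = z − λⱼ (j ≠ i) and m ≥ 0, e_m(μ₁,…,μ_{n-1}) = Σ_{l=0}^m binom(n−1−m+l, l) · (Σ_{(r₁,…,r_{m-l}): r₁+2r₂+⋯+(m-l)r_{m-l}=m-l} ∏_{j=1}^{m-l} (−bⱼ)^{r_j}/(r_j!·j^{r_j})) · z^l, where b_k = Σ_{j≠i} λⱼ^k, and the inner sum is 1 when m−l = 0. -/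
open Finset

noncomputable def pfun (c : ℕ → ℂ) (j m : ℕ) : ℂ :=
  (c (j + 1)) ^ m / ((m.factorial : ℂ) * ((j + 1 : ℕ) : ℂ) ^ m)

lemma pfun_zero (c : ℕ → ℂ) (j : ℕ) : pfun c j 0 = 1 := by simp [pfun]

lemma pfun_step (c : ℕ → ℂ) (j m : ℕ) :
    ((j + 1 : ℕ) : ℂ) * ((m + 1 : ℕ) : ℂ) * pfun c j (m + 1) = c (j + 1) * pfun c j m := by
  have h1 : ((m.factorial : ℂ)) ≠ 0 := Nat.cast_ne_zero.mpr m.factorial_ne_zero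
  have h2 : ((j + 1 : ℕ) : ℂ) ≠ 0 := Nat.cast_ne_zero.mpr (Nat.succ_ne_zero j)
  have h3 : ((m + 1 : ℕ) : ℂ) ≠ 0 := Nat.cast_ne_zero.mpr (Nat.succ_ne_zero m)
  have hD : (m.factorial : ℂ) * ((j + 1 : ℕ) : ℂ) ^ m ≠ 0 :=
    mul_ne_zero h1 (pow_ne_zero _ h2)
  have key : (((m + 1).factorial : ℂ)) * ((j + 1 : ℕ) : ℂ) ^ (m + 1) =
      (((m + 1 : ℕ) : ℂ) * ((j + 1 : ℕ) : ℂ)) * ((m.factorial : ℂ) * ((j + 1 : ℕ) : ℂ) ^ m) := by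
    rw [Nat.factorial_succ, pow_succ]; push_cast; ring
  have hB : (((m + 1 : ℕ) : ℂ) * ((j + 1 : ℕ) : ℂ)) * ((m.factorial : ℂ) * ((j + 1 : ℕ) : ℂ) ^ m) ≠ 0 :=
    mul_ne_zero (mul_ne_zero h3 h2) hD
  rw [pfun, pfun, key, pow_succ, ← mul_div_assoc, ← mul_div_assoc, div_eq_div_iff hB hD]
  ring

noncomputable def Wsum (c : ℕ → ℂ) (s : ℕ) : ℂ :=
  ∑ r ∈ (Fintype.piFinset fun _ : Fin s => Finset.range (s + 1)).filter
      (fun r => ∑ j, (j.1 + 1) * r j = s),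
    ∏ j, pfun c j.1 (r j)

lemma Wsum_zero (c : ℕ → ℂ) : Wsum c 0 = 1 := by
  rw [Wsum, Finset.filter_true_of_mem (by intro r _; simp)]
  simp [Fintype.card_piFinset]

lemma mem_mapCastLE {u k : ℕ} (hu : u ≤ k) (j : Fin k) :
    j ∈ univ.map (Fin.castLEEmb hu) ↔ j.1 < u := by
  simp only [Finset.mem_map, Finset.mem_univ, true_and]
  constructor
  · rintro ⟨a, rfl⟩; exact a.2
  · intro h; exact ⟨⟨j.1, h⟩, rfl⟩

lemma prod_trunc {u k : ℕ} (hu : u ≤ k) (g : Fin k → ℂ) (hg : ∀ j : Fin k, u ≤ j.1 → g j = 1) :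
    ∏ j : Fin k, g j = ∏ j : Fin u, g (Fin.castLE hu j) := by
  rw [← Finset.prod_subset (Finset.subset_univ (univ.map (Fin.castLEEmb hu)))
      (fun x _ hx => hg x (le_of_not_gt (fun h => hx ((mem_mapCastLE hu x).mpr h))))]
  rw [Finset.prod_map]
  rfl

lemma sum_trunc_nat {u k : ℕ} (hu : u ≤ k) (g : Fin k → ℕ) (hg : ∀ j : Fin k, u ≤ j.1 → g j = 0) :
    ∑ j : Fin k, g j = ∑ j : Fin u, g (Fin.castLE hu j) := by
  rw [← Finset.sum_subset (Finset.subset_univ (univ.map (Fin.castLEEmb hu)))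
      (fun x _ hx => hg x (le_of_not_gt (fun h => hx ((mem_mapCastLE hu x).mpr h))))]
  rw [Finset.sum_map]
  rfl

lemma Wsum_restrict (c : ℕ → ℂ) {u k B : ℕ} (hu : u ≤ k) (hB : u < B) :
    ∑ r ∈ (Fintype.piFinset fun _ : Fin k => Finset.range B).filter
        (fun r => ∑ j, (j.1 + 1) * r j = u),
      ∏ j, pfun c j.1 (r j) = Wsum c u := by
  have fact : ∀ r : Fin k → ℕ, (∑ j, (j.1 + 1) * r j = u) → ∀ j : Fin k,
      r j ≤ u ∧ (u ≤ j.1 → r j = 0) := by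
    intro r hr j
    have h1 : (j.1 + 1) * r j ≤ u := by
      rw [← hr]
      exact Finset.single_le_sum (f := fun j : Fin k => (j.1 + 1) * r j)
        (fun _ _ => Nat.zero_le _) (Finset.mem_univ j)
    constructor
    · calc r j ≤ (j.1 + 1) * r j := Nat.le_mul_of_pos_left _ (Nat.succ_pos _)
        _ ≤ u := h1
    · intro hju
      by_contra h0
      have : j.1 + 1 ≤ (j.1 + 1) * r j := Nat.le_mul_of_pos_right _ (Nat.pos_of_ne_zero h0)
      omega
  rw [Wsum]
  refine Finset.sum_nbij' (fun r => fun j : Fin u => r (Fin.castLE hu j))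
    (fun r => fun j : Fin k => if h : j.1 < u then r ⟨j.1, h⟩ else 0) ?_ ?_ ?_ ?_ ?_
  · intro r hr
    rw [Finset.mem_filter] at hr ⊢
    obtain ⟨hr1, hr2⟩ := hr
    refine ⟨?_, ?_⟩
    · rw [Fintype.mem_piFinset]
      intro j
      rw [Finset.mem_range, Nat.lt_succ_iff]
      exact ((fact r hr2 (Fin.castLE hu j)).1)
    · show ∑ j : Fin u, (j.1 + 1) * r (Fin.castLE hu j) = u
      have := sum_trunc_nat hu (fun j => (j.1 + 1) * r j)
        (fun j hj => by simp only [(fact r hr2 j).2 hj, Nat.mul_zero])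
      simp only [Fin.coe_castLE] at this
      rw [← this]
      exact hr2
  · intro r hr
    rw [Finset.mem_filter] at hr ⊢
    obtain ⟨hr1, hr2⟩ := hr
    rw [Fintype.mem_piFinset] at hr1
    refine ⟨?_, ?_⟩
    · rw [Fintype.mem_piFinset]
      intro j
      rw [Finset.mem_range]
      show (if h : j.1 < u then r ⟨j.1, h⟩ else 0) < B
      by_cases h : j.1 < u
      · rw [dif_pos h]
        have := hr1 ⟨j.1, h⟩
        rw [Finset.mem_range, Nat.lt_succ_iff] at this
        omega
      · rw [dif_neg h]; omega
    · show ∑ j : Fin k, (j.1 + 1) * (if h : j.1 < u then r ⟨j.1, h⟩ else 0) = u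
      rw [sum_trunc_nat hu (fun j => (j.1 + 1) * (if h : j.1 < u then r ⟨j.1, h⟩ else 0))
        (fun j hj => by simp only [dif_neg (not_lt.mpr hj), Nat.mul_zero])]
      simp only [Fin.coe_castLE]
      calc ∑ j : Fin u, (j.1 + 1) * (if h : j.1 < u then r ⟨j.1, h⟩ else 0)
          = ∑ j : Fin u, (j.1 + 1) * r j :=
            Finset.sum_congr rfl (fun j _ => by rw [dif_pos j.2])
        _ = u := hr2
  · intro r hr
    rw [Finset.mem_filter] at hr
    funext j
    show (if h : j.1 < u then r (Fin.castLE hu ⟨j.1, h⟩) else 0) = r j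
    by_cases h : j.1 < u
    · rw [dif_pos h]
      congr 1
    · rw [dif_neg h]
      exact ((fact r hr.2 j).2 (not_lt.mp h)).symm
  · intro r _
    funext j
    show (if h : (Fin.castLE hu j).1 < u then r ⟨(Fin.castLE hu j).1, h⟩ else 0) = r j
    simp only [Fin.coe_castLE]
    rw [dif_pos j.2]
  · intro r hr
    rw [Finset.mem_filter] at hr
    have := prod_trunc hu (fun j => pfun c j.1 (r j))
      (fun j hj => by simp only [(fact r hr.2 j).2 hj, pfun_zero])
    simp only [Fin.coe_castLE] at this
    exact this

lemma sum_erase_split {s : ℕ} (j : Fin s) (r : Fin s → ℕ) :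
    ∑ i : Fin s, (i.1 + 1) * r i =
      (j.1 + 1) * r j + ∑ i ∈ univ.erase j, (i.1 + 1) * r i :=
  (Finset.add_sum_erase _ _ (Finset.mem_univ j)).symm

lemma update_sum_erase {s : ℕ} (j : Fin s) (r : Fin s → ℕ) (v : ℕ) :
    ∑ i : Fin s, (i.1 + 1) * (Function.update r j v) i =
      (j.1 + 1) * v + ∑ i ∈ univ.erase j, (i.1 + 1) * r i := by
  rw [← Finset.add_sum_erase _ _ (Finset.mem_univ j), Function.update_self]
  congr 1
  exact Finset.sum_congr rfl fun i hi => by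
    rw [Function.update_of_ne (Finset.mem_erase.mp hi).1]

lemma update_prod_erase {s : ℕ} (c : ℕ → ℂ) (j : Fin s) (r : Fin s → ℕ) (v : ℕ) :
    ∏ i : Fin s, pfun c i.1 ((Function.update r j v) i) =
      pfun c j.1 v * ∏ i ∈ univ.erase j, pfun c i.1 (r i) := by
  rw [← Finset.mul_prod_erase _ _ (Finset.mem_univ j), Function.update_self]
  congr 1
  exact Finset.prod_congr rfl fun i hi => by
    rw [Function.update_of_ne (Finset.mem_erase.mp hi).1]

lemma Wsum_rec (c : ℕ → ℂ) (s : ℕ) :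
    (s : ℂ) * Wsum c s = ∑ d ∈ Finset.range s, c (d + 1) * Wsum c (s - (d + 1)) := by
  rw [Wsum, Finset.mul_sum]
  have expand : ∀ r ∈ (Fintype.piFinset fun _ : Fin s => Finset.range (s + 1)).filter
      (fun r => ∑ j, (j.1 + 1) * r j = s),
      (s : ℂ) * ∏ j, pfun c j.1 (r j)
        = ∑ j : Fin s, (((j.1 + 1) * r j : ℕ) : ℂ) * ∏ i, pfun c i.1 (r i) := by
    intro r hr
    rw [Finset.mem_filter] at hr
    rw [← Finset.sum_mul, ← Nat.cast_sum, hr.2]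
  rw [Finset.sum_congr rfl expand, Finset.sum_comm]
  rw [← Fin.sum_univ_eq_sum_range (fun d => c (d + 1) * Wsum c (s - (d + 1))) s]
  apply Finset.sum_congr rfl
  intro j _
  show _ = c (j.1 + 1) * Wsum c (s - (j.1 + 1))
  have hju : s - (j.1 + 1) ≤ s := Nat.sub_le _ _
  have hjB : s - (j.1 + 1) < s + 1 := by omega
  rw [← Wsum_restrict c hju hjB, Finset.mul_sum]
  rw [← Finset.sum_filter_of_ne (p := fun r : Fin s → ℕ => r j ≠ 0) (by
    intro r _ hne h0
    apply hne
    rw [h0, Nat.mul_zero, Nat.cast_zero, zero_mul])]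
  symm
  refine Finset.sum_nbij' (fun r => Function.update r j (r j + 1))
    (fun r => Function.update r j (r j - 1)) ?_ ?_ ?_ ?_ ?_
  · -- membership forward
    intro r hr
    rw [Finset.mem_filter, Fintype.mem_piFinset] at hr
    obtain ⟨hr1, hr2⟩ := hr
    rw [Finset.mem_filter, Finset.mem_filter, Fintype.mem_piFinset]
    have hj2 := j.2
    refine ⟨⟨?_, ?_⟩, ?_⟩
    · intro i
      rw [Finset.mem_range, Nat.lt_succ_iff]
      change Function.update r j (r j + 1) i ≤ s
      by_cases h : i = j
      · rw [h, Function.update_self]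
        have hb : (j.1 + 1) * r j ≤ s - (j.1 + 1) := by
          rw [← hr2]
          exact Finset.single_le_sum (f := fun i : Fin s => (i.1 + 1) * r i)
            (fun _ _ => Nat.zero_le _) (Finset.mem_univ j)
        have hrj : r j ≤ (j.1 + 1) * r j := Nat.le_mul_of_pos_left _ (Nat.succ_pos _)
        omega
      · rw [Function.update_of_ne h]
        have := hr1 i
        rw [Finset.mem_range, Nat.lt_succ_iff] at this
        exact this
    · rw [update_sum_erase]
      rw [sum_erase_split j r] at hr2
      have expand : (j.1 + 1) * (r j + 1) = (j.1 + 1) * r j + (j.1 + 1) := by ring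
      omega
    · simp only [Function.update_self]
      exact Nat.succ_ne_zero _
  · -- membership backward
    intro r hr
    rw [Finset.mem_filter, Finset.mem_filter, Fintype.mem_piFinset] at hr
    obtain ⟨⟨hr1, hr2⟩, hr3⟩ := hr
    rw [Finset.mem_filter, Fintype.mem_piFinset]
    obtain ⟨t, ht⟩ := Nat.exists_eq_succ_of_ne_zero hr3
    have hj2 := j.2
    refine ⟨?_, ?_⟩
    · intro i
      rw [Finset.mem_range, Nat.lt_succ_iff]
      change Function.update r j (r j - 1) i ≤ s
      by_cases h : i = j
      · rw [h, Function.update_self]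
        have := hr1 j
        rw [Finset.mem_range, Nat.lt_succ_iff] at this
        omega
      · rw [Function.update_of_ne h]
        have := hr1 i
        rw [Finset.mem_range, Nat.lt_succ_iff] at this
        exact this
    · rw [update_sum_erase]
      rw [sum_erase_split j r] at hr2
      rw [ht] at hr2 ⊢
      simp only [Nat.succ_sub_one, Nat.succ_eq_add_one] at hr2 ⊢
      have expand : (j.1 + 1) * (t + 1) = (j.1 + 1) * t + (j.1 + 1) := by ring
      omega
  · -- left inverse
    intro r _
    simp [Function.update_idem]
  · -- right inverse
    intro r hr
    rw [Finset.mem_filter] at hr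
    obtain ⟨t, ht⟩ := Nat.exists_eq_succ_of_ne_zero hr.2
    simp [Function.update_idem, ht]
  · -- values
    intro r hr
    simp only [Function.update_self]
    rw [update_prod_erase,
      ← Finset.mul_prod_erase Finset.univ (fun i => pfun c i.1 (r i)) (Finset.mem_univ j)]
    calc c (j.1 + 1) * (pfun c j.1 (r j) * ∏ i ∈ univ.erase j, pfun c i.1 (r i))
        = (c (j.1 + 1) * pfun c j.1 (r j)) * ∏ i ∈ univ.erase j, pfun c i.1 (r i) := by ring
      _ = (((j.1 + 1 : ℕ) : ℂ) * ((r j + 1 : ℕ) : ℂ) * pfun c j.1 (r j + 1)) *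
            ∏ i ∈ univ.erase j, pfun c i.1 (r i) := by rw [pfun_step]
      _ = (((j.1 + 1) * (r j + 1) : ℕ) : ℂ) *
            (pfun c j.1 (r j + 1) * ∏ i ∈ univ.erase j, pfun c i.1 (r i)) := by
          push_cast; ring

lemma esymm_eval {ι : Type*} [DecidableEq ι] (S : Finset ι) (x : ι → ℂ) (k : ℕ) :
    (MvPolynomial.aeval fun j : {a // a ∈ S} => x j.1)
        (MvPolynomial.esymm {a // a ∈ S} ℂ k)
      = ∑ s ∈ Finset.powersetCard k S, ∏ j ∈ s, x j := by
  rw [MvPolynomial.aeval_esymm_eq_multiset_esymm]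
  rw [show Multiset.map (fun j : {a // a ∈ S} => x j.1) (Finset.univ.val) = S.val.map x by
    rw [Finset.univ_eq_attach]
    have : S.attach.val = S.val.attach := rfl
    rw [this, show (fun j : {a // a ∈ S} => x j.1) = x ∘ Subtype.val from rfl,
      ← Multiset.map_map, Multiset.attach_map_val]]
  exact Finset.esymm_map_val x S k

lemma psum_eval {ι : Type*} [DecidableEq ι] (S : Finset ι) (x : ι → ℂ) (d : ℕ) :
    (MvPolynomial.aeval fun j : {a // a ∈ S} => x j.1)
        (MvPolynomial.psum {a // a ∈ S} ℂ d)
      = ∑ j ∈ S, x j ^ d := by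
  rw [MvPolynomial.psum, map_sum]
  simp only [map_pow, MvPolynomial.aeval_X]
  exact Finset.sum_coe_sort S (fun j => x j ^ d)

lemma newton_concrete {ι : Type*} [DecidableEq ι] (S : Finset ι) (x : ι → ℂ) (k : ℕ) :
    (k : ℂ) * ∑ s ∈ Finset.powersetCard k S, ∏ j ∈ s, x j =
      (-1) ^ (k + 1) * ∑ a ∈ (Finset.HasAntidiagonal.antidiagonal k).filter (fun a => a.1 < k),
        (-1) ^ a.1 * (∑ s ∈ Finset.powersetCard a.1 S, ∏ j ∈ s, x j)
          * (∑ j ∈ S, x j ^ a.2) := by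
  have h := congrArg (MvPolynomial.aeval fun j : {a // a ∈ S} => x j.1)
    (MvPolynomial.mul_esymm_eq_sum {a // a ∈ S} ℂ k)
  simp only [map_mul, map_sum, map_pow, map_neg, map_one, map_natCast] at h
  rw [esymm_eval] at h
  rw [h]
  congr 1
  apply Finset.sum_congr rfl
  intro a _
  rw [esymm_eval, psum_eval]

lemma E_rec {ι : Type*} [DecidableEq ι] (S : Finset ι) (lam : ι → ℂ) (k : ℕ) :
    (k : ℂ) * ∑ s ∈ Finset.powersetCard k S, ∏ j ∈ s, (-(lam j)) =
      ∑ d ∈ Finset.range k, (-(∑ j ∈ S, lam j ^ (d + 1))) *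
        ∑ s ∈ Finset.powersetCard (k - (d + 1)) S, ∏ j ∈ s, (-(lam j)) := by
  rw [newton_concrete S (fun j => -(lam j)) k, Finset.mul_sum]
  refine Finset.sum_nbij' (fun a => a.2 - 1) (fun d => (k - (d + 1), d + 1)) ?_ ?_ ?_ ?_ ?_
  · intro a ha
    rw [Finset.mem_filter, Finset.HasAntidiagonal.mem_antidiagonal] at ha
    rw [Finset.mem_range]
    show a.2 - 1 < k
    omega
  · intro d hd
    rw [Finset.mem_range] at hd
    rw [Finset.mem_filter, Finset.HasAntidiagonal.mem_antidiagonal]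
    constructor
    · show k - (d + 1) + (d + 1) = k; omega
    · show k - (d + 1) < k; omega
  · intro a ha
    rw [Finset.mem_filter, Finset.HasAntidiagonal.mem_antidiagonal] at ha
    show (k - (a.2 - 1 + 1), a.2 - 1 + 1) = a
    rw [show a.2 - 1 + 1 = a.2 by omega, show k - a.2 = a.1 by omega]
  · intro d hd
    simp only
    omega
  · intro a ha
    rw [Finset.mem_filter, Finset.HasAntidiagonal.mem_antidiagonal] at ha
    obtain ⟨h1, h2⟩ := ha
    show (-1 : ℂ) ^ (k + 1) *
        ((-1) ^ a.1 * (∑ s ∈ Finset.powersetCard a.1 S, ∏ j ∈ s, (-(lam j)))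
          * (∑ j ∈ S, (-(lam j)) ^ a.2)) =
      (-(∑ j ∈ S, lam j ^ (a.2 - 1 + 1))) *
        ∑ s ∈ Finset.powersetCard (k - (a.2 - 1 + 1)) S, ∏ j ∈ s, (-(lam j))
    rw [show a.2 - 1 + 1 = a.2 by omega, show k - a.2 = a.1 by omega]
    have hps : ∑ j ∈ S, (-(lam j)) ^ a.2 = (-1 : ℂ) ^ a.2 * ∑ j ∈ S, lam j ^ a.2 := by
      rw [Finset.mul_sum]
      exact Finset.sum_congr rfl fun j _ => by rw [neg_pow]
    rw [hps]
    have hsign : (-1 : ℂ) ^ (k + 1) * (-1) ^ a.1 * (-1) ^ a.2 = -1 := by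
      rw [← pow_add, ← pow_add, show k + 1 + a.1 + a.2 = 2 * k + 1 by omega]
      exact Odd.neg_one_pow ⟨k, by ring⟩
    calc (-1 : ℂ) ^ (k + 1) *
          ((-1) ^ a.1 * (∑ s ∈ Finset.powersetCard a.1 S, ∏ j ∈ s, (-(lam j))) *
            ((-1) ^ a.2 * ∑ j ∈ S, lam j ^ a.2))
        = ((-1 : ℂ) ^ (k + 1) * (-1) ^ a.1 * (-1) ^ a.2) *
            ((∑ s ∈ Finset.powersetCard a.1 S, ∏ j ∈ s, (-(lam j))) *
              ∑ j ∈ S, lam j ^ a.2) := by ring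
      _ = -(∑ j ∈ S, lam j ^ a.2) *
            ∑ s ∈ Finset.powersetCard a.1 S, ∏ j ∈ s, (-(lam j)) := by rw [hsign]; ring

lemma E_eq_W {ι : Type*} [DecidableEq ι] (S : Finset ι) (lam : ι → ℂ) (k : ℕ) :
    ∑ s ∈ Finset.powersetCard k S, ∏ j ∈ s, (-(lam j)) =
      Wsum (fun d => -(∑ j ∈ S, lam j ^ d)) k := by
  induction k using Nat.strong_induction_on with
  | _ k ih =>
    match k with
    | 0 => simp [Wsum_zero]
    | (k + 1) =>
      have hk : ((k + 1 : ℕ) : ℂ) ≠ 0 := Nat.cast_ne_zero.mpr (Nat.succ_ne_zero k)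
      apply mul_left_cancel₀ hk
      push_cast
      rw [show ((k : ℂ) + 1) * (∑ s ∈ Finset.powersetCard (k+1) S, ∏ j ∈ s, (-(lam j))) =
          (((k + 1 : ℕ) : ℂ)) * ∑ s ∈ Finset.powersetCard (k+1) S, ∏ j ∈ s, (-(lam j)) by
            push_cast; ring,
        E_rec S lam (k + 1)]
      rw [show ((k : ℂ) + 1) * Wsum (fun d => -(∑ j ∈ S, lam j ^ d)) (k + 1) =
          (((k + 1 : ℕ) : ℂ)) * Wsum (fun d => -(∑ j ∈ S, lam j ^ d)) (k + 1) by
            push_cast; ring,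
        Wsum_rec (fun d => -(∑ j ∈ S, lam j ^ d)) (k + 1)]
      apply Finset.sum_congr rfl
      intro d hd
      rw [Finset.mem_range] at hd
      rw [ih (k + 1 - (d + 1)) (by omega)]

lemma count_supersets {ι : Type*} [DecidableEq ι] (S u : Finset ι) (hu : u ⊆ S) (m : ℕ)
    (hum : u.card ≤ m) :
    ((Finset.powersetCard m S).filter (fun s => u ⊆ s)).card
      = (S.card - u.card).choose (m - u.card) := by
  rw [← Finset.card_sdiff_of_subset hu, ← Finset.card_powersetCard (m - u.card) (S \ u)]
  refine Finset.card_nbij' (fun s => s \ u) (fun t => t ∪ u) ?_ ?_ ?_ ?_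
  · intro s hs
    rw [Finset.mem_coe, Finset.mem_filter, Finset.mem_powersetCard] at hs
    obtain ⟨⟨hsS, hsm⟩, hus⟩ := hs
    rw [Finset.mem_coe, Finset.mem_powersetCard]
    exact ⟨Finset.sdiff_subset_sdiff hsS Finset.Subset.rfl,
      by rw [Finset.card_sdiff_of_subset hus, hsm]⟩
  · intro t ht
    rw [Finset.mem_coe, Finset.mem_powersetCard, Finset.subset_sdiff] at ht
    obtain ⟨⟨htS, htu⟩, htc⟩ := ht
    rw [Finset.mem_coe, Finset.mem_filter, Finset.mem_powersetCard]
    refine ⟨⟨Finset.union_subset htS hu, ?_⟩, Finset.subset_union_right⟩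
    rw [Finset.card_union_of_disjoint htu, htc]
    omega
  · intro s hs
    rw [Finset.mem_coe, Finset.mem_filter] at hs
    exact Finset.sdiff_union_of_subset hs.2
  · intro t ht
    rw [Finset.mem_coe, Finset.mem_powersetCard, Finset.subset_sdiff] at ht
    show (t ∪ u) \ u = t
    rw [Finset.union_sdiff_right]
    exact Finset.sdiff_eq_self_iff_disjoint.mpr ht.1.2

lemma count_supersets_zero {ι : Type*} [DecidableEq ι] (S u : Finset ι) (m : ℕ)
    (hum : m < u.card) :
    ((Finset.powersetCard m S).filter (fun s => u ⊆ s)).card = 0 := by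
  rw [Finset.card_eq_zero, Finset.filter_eq_empty_iff]
  intro s hs hus
  rw [Finset.mem_powersetCard] at hs
  have := Finset.card_le_card hus
  omega

lemma step1 {ι : Type*} [DecidableEq ι] (S : Finset ι) (x : ι → ℂ) (z : ℂ) (m : ℕ)
    (hm : m ≤ S.card) :
    ∑ s ∈ Finset.powersetCard m S, ∏ j ∈ s, (z + x j) =
      ∑ l ∈ Finset.range (m + 1), ((S.card - m + l).choose l : ℂ) *
        (∑ u ∈ Finset.powersetCard (m - l) S, ∏ j ∈ u, x j) * z ^ l := by
  have expand : ∀ s ∈ Finset.powersetCard m S, ∏ j ∈ s, (z + x j)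
      = ∑ u ∈ s.powerset, (∏ j ∈ u, x j) * z ^ (m - u.card) := by
    intro s hs
    rw [Finset.mem_powersetCard] at hs
    calc ∏ j ∈ s, (z + x j) = ∏ j ∈ s, (x j + z) :=
          Finset.prod_congr rfl fun j _ => add_comm _ _
      _ = ∑ u ∈ s.powerset, (∏ j ∈ u, x j) * z ^ (m - u.card) := by
          rw [Finset.prod_add]
          refine Finset.sum_congr rfl fun u hu => ?_
          rw [Finset.mem_powerset] at hu
          rw [Finset.prod_const, Finset.card_sdiff_of_subset hu, hs.2]
  rw [Finset.sum_congr rfl expand]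
  rw [Finset.sum_comm' (s := Finset.powersetCard m S) (t := fun s => s.powerset)
    (t' := S.powerset) (s' := fun u => (Finset.powersetCard m S).filter (fun s => u ⊆ s))
    (by
      intro s u
      rw [Finset.mem_filter, Finset.mem_powerset, Finset.mem_powerset, Finset.mem_powersetCard]
      constructor
      · rintro ⟨hs, hus⟩
        exact ⟨⟨⟨hs.1, hs.2⟩, hus⟩, hus.trans hs.1⟩
      · rintro ⟨⟨hs, hus⟩, _⟩
        exact ⟨hs, hus⟩)]
  rw [Finset.sum_congr rfl (fun u _ => by
    rw [Finset.sum_const, nsmul_eq_mul] :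
    ∀ u ∈ S.powerset, ∑ _s ∈ (Finset.powersetCard m S).filter (fun s => u ⊆ s),
        (∏ j ∈ u, x j) * z ^ (m - u.card)
      = (((Finset.powersetCard m S).filter (fun s => u ⊆ s)).card : ℂ) *
          ((∏ j ∈ u, x j) * z ^ (m - u.card)))]
  rw [Finset.powerset_card_biUnion, Finset.sum_biUnion ((Finset.pairwise_disjoint_powersetCard S).set_pairwise _)]
  rw [← Finset.sum_subset (Finset.range_subset_range.mpr (by omega : m + 1 ≤ S.card + 1))
    (by
      intro k hk hk2
      rw [Finset.mem_range] at hk hk2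
      apply Finset.sum_eq_zero
      intro u hu
      rw [Finset.mem_powersetCard] at hu
      rw [count_supersets_zero S u m (by omega)]
      simp)]
  conv_rhs => rw [← Finset.sum_range_reflect]
  apply Finset.sum_congr rfl
  intro k hk
  rw [Finset.mem_range] at hk
  have hk' : k ≤ m := by omega
  rw [show m + 1 - 1 - k = m - k by omega, show m - (m - k) = k by omega,
    show S.card - m + (m - k) = S.card - k by omega]
  calc ∑ u ∈ Finset.powersetCard k S,
        (((Finset.powersetCard m S).filter (fun s => u ⊆ s)).card : ℂ) *
          ((∏ j ∈ u, x j) * z ^ (m - u.card))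
      = ∑ u ∈ Finset.powersetCard k S,
          (((S.card - k).choose (m - k) : ℕ) : ℂ) * ((∏ j ∈ u, x j) * z ^ (m - k)) := by
        refine Finset.sum_congr rfl fun u hu => ?_
        rw [Finset.mem_powersetCard] at hu
        rw [← hu.2, count_supersets S u hu.1 m (by omega), hu.2]
    _ = (((S.card - k).choose (m - k) : ℕ) : ℂ) *
          (∑ u ∈ Finset.powersetCard k S, ∏ j ∈ u, x j) * z ^ (m - k) := by
        rw [← Finset.mul_sum, ← Finset.sum_mul, mul_assoc]

theorem stmt_19 (n : ℕ) (lam : Fin n → ℂ) (i : Fin n) (z : ℂ)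
    (m : ℕ) (hm : m ≤ n - 1) :
    let b : ℕ → ℂ := fun k => ∑ j ∈ Finset.univ.erase i, lam j ^ k
    (∑ s ∈ Finset.powersetCard m (Finset.univ.erase i), ∏ j ∈ s, (z - lam j)) =
      ∑ l ∈ Finset.range (m + 1),
        ((n - 1 - m + l).choose l : ℂ) *
          (∑ r ∈ (Fintype.piFinset fun _ : Fin (m - l) => Finset.range (m - l + 1)).filter
              (fun r => ∑ j, (j.1 + 1) * r j = m - l),
            ∏ j, (-(b (j.1 + 1))) ^ (r j) /
              (((r j).factorial : ℂ) * ((j.1 + 1 : ℕ) : ℂ) ^ (r j))) * z ^ l := by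
  intro b
  have hb : ∀ d, b d = ∑ j ∈ Finset.univ.erase i, lam j ^ d := fun _ => rfl
  have hS : (Finset.univ.erase i).card = n - 1 := by
    rw [Finset.card_erase_of_mem (Finset.mem_univ i), Finset.card_univ, Fintype.card_fin]
  have key := step1 (Finset.univ.erase i) (fun j => -(lam j)) z m (by rw [hS]; exact hm)
  rw [hS] at key
  have lhs_eq : ∑ s ∈ Finset.powersetCard m (Finset.univ.erase i), ∏ j ∈ s, (z - lam j)
      = ∑ s ∈ Finset.powersetCard m (Finset.univ.erase i), ∏ j ∈ s, (z + (-(lam j))) :=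
    Finset.sum_congr rfl fun s _ => Finset.prod_congr rfl fun j _ => sub_eq_add_neg _ _
  rw [lhs_eq, key]
  apply Finset.sum_congr rfl
  intro l _
  rw [E_eq_W (Finset.univ.erase i) lam (m - l), Wsum]
  simp only [pfun, hb]
end
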